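/- Suppose the feasible set of the centralized problem (7) is nonempty, i.e., there exists Δd ∈ ℝ^n with D̲_k ≤ d_k + Δd_k ≤ D̄_k for all k and (d_k + Δd_k − c_k)_{k=1,…,n} ∈ Q. Then the energy-sharing game has at least one generalized Nash equilibrium (Δd*, q*, q^{c*}, δ*). -/

import Mathlib

open Finset

/-- The set `Q` of feasible sharing schedules: total exchange is zero and all
line-flow limits are respected. -/
def Qset {n L : ℕ} (π : Fin L → Fin n → ℝ) (F : Fin L → ℝ) : Set (Fin n → ℝ) :=
  {qc | (∑ k, qc k) = 0 ∧
    ∀ l : Fin L, -F l ≤ ∑ k, π l k * qc k ∧ ∑ k, π l k * qc k ≤ F l}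

/-- `c k = 0` for consumers `k < I` and `c k = w k + Δw k` for prosumers. -/
def cvec (I J : ℕ) (w Δw : Fin (I + J) → ℝ) : Fin (I + J) → ℝ :=
  fun k => if (k : ℕ) < I then 0 else w k + Δw k

/-- Generalized Nash equilibrium of the energy-sharing game:
(i) each user's `(Δd k, q k)` minimizes its disutility plus penalty over its own
feasible set (parameterized by `qc k` and `δ k`);
(ii) the operator's `(qc, δ)` minimizes `∑ δ_k²` over its feasible set
(parameterized by `q`). -/
def IsGNE {n L : ℕ} (α β ζ d c Dlo Dhi : Fin n → ℝ) (τ : ℝ)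
    (π : Fin L → Fin n → ℝ) (F : Fin L → ℝ)
    (Δd q qc δ : Fin n → ℝ) : Prop :=
  (∀ k : Fin n,
    (q k + δ k = d k + Δd k - c k ∧ Dlo k ≤ d k + Δd k ∧ d k + Δd k ≤ Dhi k) ∧
    (∀ x y : ℝ, y + δ k = d k + x - c k → Dlo k ≤ d k + x → d k + x ≤ Dhi k →
      (α k * (Δd k) ^ 2 + β k * Δd k + ζ k) + τ / 2 * (qc k - q k) ^ 2 ≤
      (α k * x ^ 2 + β k * x + ζ k) + τ / 2 * (qc k - y) ^ 2)) ∧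
  ((∀ k, δ k = qc k - q k) ∧ qc ∈ Qset π F ∧
    (∀ qc' δ' : Fin n → ℝ, (∀ k, δ' k = qc' k - q k) → qc' ∈ Qset π F →
      ∑ k, (δ k) ^ 2 ≤ ∑ k, (δ' k) ^ 2))

/-- Feasibility for the centralized problem (7). -/
def Feasible7 {n L : ℕ} (d c Dlo Dhi : Fin n → ℝ)
    (π : Fin L → Fin n → ℝ) (F : Fin L → ℝ) (Δd : Fin n → ℝ) : Prop :=
  (∀ k, Dlo k ≤ d k + Δd k ∧ d k + Δd k ≤ Dhi k) ∧
  (fun k => d k + Δd k - c k) ∈ Qset π F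


section FarkasLemma
variable {H : Type*} [NormedAddCommGroup H] [InnerProductSpace ℝ H] [FiniteDimensional ℝ H]
variable {ι : Type*} [Fintype ι]

open Filter
open scoped InnerProductSpace Topology

variable {H : Type*} [NormedAddCommGroup H] [InnerProductSpace ℝ H] [FiniteDimensional ℝ H]
variable {ι : Type*} [Fintype ι]

/-- Carathéodory for cones: any conic combination is a conic combination with
linearly independent support. -/
lemma cone_caratheodory (a : ι → H) (s : Finset ι) :
    ∀ lam : ι → ℝ, (∀ i, 0 ≤ lam i) → (∀ i ∉ s, lam i = 0) →
    ∃ (t : Finset ι) (mu : ι → ℝ), t ⊆ s ∧ (LinearIndependent ℝ (fun i : t => a i)) ∧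
      (∀ i, 0 ≤ mu i) ∧ (∀ i ∉ t, mu i = 0) ∧ ∑ i, mu i • a i = ∑ i, lam i • a i := by
  classical
  induction s using Finset.strongInduction with
  | _ s ih =>
    intro lam hnn hsupp
    by_cases hli : LinearIndependent ℝ (fun i : s => a i)
    · exact ⟨s, lam, subset_rfl, hli, hnn, hsupp, rfl⟩
    · obtain ⟨g, hg0, i1, hgi1⟩ := Fintype.not_linearIndependent_iff.mp hli
      have key : ∃ c : ι → ℝ, (∀ i ∉ s, c i = 0) ∧ (∑ i, c i • a i = 0) ∧ ∃ j ∈ s, 0 < c j := by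
        set c : ι → ℝ := fun i => if h : i ∈ s then g ⟨i, h⟩ else 0 with hc
        have hsum : ∑ i, c i • a i = 0 := by
          rw [← Finset.sum_subset s.subset_univ (fun i _ hi => by simp [hc, hi])]
          rw [← hg0, ← Finset.sum_attach s (fun i => c i • a i)]
          apply Finset.sum_congr rfl
          intro i _
          simp [hc, i.2]
        rcases lt_trichotomy (g i1) 0 with hneg | hzero | hpos
        · refine ⟨-c, fun i hi => by simp [hc, hi], by simpa using congrArg Neg.neg hsum, i1, i1.2, ?_⟩
          simp only [Pi.neg_apply, hc, dif_pos i1.2]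
          linarith
        · exact absurd hzero hgi1
        · exact ⟨c, fun i hi => by simp [hc, hi], hsum, i1, i1.2, by simp [hc, i1.2, hpos]⟩
      obtain ⟨c, hcsupp, hcsum, j, hjs, hcj⟩ := key
      set T : Finset ι := s.filter (fun i => 0 < c i) with hT
      have hTne : T.Nonempty := ⟨j, by simp [hT, hjs, hcj]⟩
      obtain ⟨i0, hi0T, hr⟩ := Finset.exists_mem_eq_inf' hTne (fun i => lam i / c i)
      set r : ℝ := T.inf' hTne (fun i => lam i / c i) with hrdef
      have hi0s : i0 ∈ s := (Finset.mem_filter.mp hi0T).1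
      have hci0 : 0 < c i0 := (Finset.mem_filter.mp hi0T).2
      have hr0 : 0 ≤ r := by
        rw [hr]; exact div_nonneg (hnn i0) hci0.le
      set mu : ι → ℝ := fun i => lam i - r * c i with hmu
      have hmunn : ∀ i, 0 ≤ mu i := by
        intro i
        by_cases hiT : i ∈ T
        · have hci : 0 < c i := (Finset.mem_filter.mp hiT).2
          have : r ≤ lam i / c i := Finset.inf'_le _ hiT
          simp only [hmu, sub_nonneg]
          rw [← le_div_iff₀ hci] at *
          · exact this
        · by_cases his : i ∈ s
          · have hci : ¬ 0 < c i := by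
              intro h; exact hiT (Finset.mem_filter.mpr ⟨his, h⟩)
            push_neg at hci
            have : r * c i ≤ 0 := mul_nonpos_of_nonneg_of_nonpos hr0 hci
            simp only [hmu, sub_nonneg]
            exact this.trans (hnn i)
          · simp [hmu, hcsupp i his, hnn i]
      have hmui0 : mu i0 = 0 := by
        simp only [hmu, hr]
        field_simp
        ring
      have hmusupp : ∀ i ∉ s.erase i0, mu i = 0 := by
        intro i hi
        by_cases hii : i = i0
        · rw [hii]; exact hmui0
        · have his : i ∉ s := by
            intro h
            exact hi (Finset.mem_erase.mpr ⟨hii, h⟩)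
          simp [hmu, hcsupp i his, hsupp i his]
      have hmusum : ∑ i, mu i • a i = ∑ i, lam i • a i := by
        simp only [hmu, sub_smul, Finset.sum_sub_distrib, mul_smul]
        rw [← Finset.smul_sum, hcsum, smul_zero, sub_zero]
      obtain ⟨t, nu, hts, hli', hnn', hsupp', hsum'⟩ :=
        ih (s.erase i0) (Finset.erase_ssubset hi0s) mu hmunn hmusupp
      exact ⟨t, nu, hts.trans (Finset.erase_subset _ _), hli', hnn', hsupp', hsum'.trans hmusum⟩


lemma cone_isClosed (a : ι → H) :
    IsClosed {x : H | ∃ lam : ι → ℝ, (∀ i, 0 ≤ lam i) ∧ x = ∑ i, lam i • a i} := by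
  classical
  have heq : {x : H | ∃ lam : ι → ℝ, (∀ i, 0 ≤ lam i) ∧ x = ∑ i, lam i • a i} =
      ⋃ t ∈ {t : Finset ι | LinearIndependent ℝ (fun i : t => a i)},
        (fun mu : t → ℝ => ∑ i, mu i • a (i : ι)) '' {mu | ∀ i, 0 ≤ mu i} := by
    ext x
    simp only [Set.mem_setOf_eq, Set.mem_iUnion, Set.mem_image]
    constructor
    · rintro ⟨lam, hnn, rfl⟩
      obtain ⟨t, mu, -, hli, hnn', hsupp', hsum'⟩ :=
        cone_caratheodory a Finset.univ lam hnn (by simp)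
      refine ⟨t, hli, fun i => mu i, fun i => hnn' i, ?_⟩
      rw [← hsum']
      rw [← Finset.sum_subset t.subset_univ (fun i _ hi => by simp [hsupp' i hi])]
      rw [← Finset.sum_attach t (fun i => mu i • a i)]
      rfl
    · rintro ⟨t, hli, mu, hnn, rfl⟩
      refine ⟨fun i => if h : i ∈ t then mu ⟨i, h⟩ else 0, fun i => ?_, ?_⟩
      · by_cases h : i ∈ t <;> simp [h, hnn _]
      · rw [← Finset.sum_subset t.subset_univ (fun i _ hi => by simp [hi])]
        rw [← Finset.sum_attach t (fun i => (if h : i ∈ t then mu ⟨i, h⟩ else 0) • a i)]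
        apply Finset.sum_congr rfl
        intro i _
        simp [i.2]
  rw [heq]
  apply Set.Finite.isClosed_biUnion (Set.toFinite _)
  intro t hli
  have hker : LinearMap.ker (Fintype.linearCombination ℝ (fun i : t => a i)) = ⊥ := by
    rw [LinearMap.ker_eq_bot']
    intro mu hmu
    rw [Fintype.linearCombination_apply] at hmu
    exact funext (Fintype.linearIndependent_iff.mp hli mu hmu)
  have hce := LinearMap.isClosedEmbedding_of_injective hker
  have hclosed : IsClosed {mu : t → ℝ | ∀ i, 0 ≤ mu i} := by
    have : {mu : t → ℝ | ∀ i, 0 ≤ mu i} = ⋂ i, {mu | 0 ≤ mu i} := by ext; simp [Set.mem_iInter]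
    rw [this]
    exact isClosed_iInter fun i => isClosed_le continuous_const (continuous_apply i)
  have himg := hce.isClosedMap _ hclosed
  have hfun : (fun mu : t → ℝ => ∑ i, mu i • a (i : ι)) =
      ⇑(Fintype.linearCombination ℝ (fun i : t => a i)) := by
    ext mu; simp [Fintype.linearCombination_apply]
  rw [hfun]
  exact himg

theorem farkas_inner [CompleteSpace H] (a : ι → H) (v : H)
    (hv : ∀ h : H, (∀ i, ⟪a i, h⟫_ℝ ≤ 0) → ⟪v, h⟫_ℝ ≤ 0) :
    ∃ lam : ι → ℝ, (∀ i, 0 ≤ lam i) ∧ v = ∑ i, lam i • a i := by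
  classical
  by_contra hcon
  set Kc : Set H := {x : H | ∃ lam : ι → ℝ, (∀ i, 0 ≤ lam i) ∧ x = ∑ i, lam i • a i} with hKc
  have hvK : v ∉ Kc := hcon
  set K : ConvexCone ℝ H :=
    { carrier := Kc
      smul_mem' := by
        rintro cpos hc x ⟨lam, hnn, rfl⟩
        exact ⟨fun i => cpos * lam i, fun i => mul_nonneg hc.le (hnn i), by
          simp [Finset.smul_sum, mul_smul]⟩
      add_mem' := by
        rintro x ⟨lam, hnn, rfl⟩ y ⟨mu, hnn', rfl⟩
        exact ⟨fun i => lam i + mu i, fun i => add_nonneg (hnn i) (hnn' i), by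
          simp [add_smul, Finset.sum_add_distrib]⟩ } with hK
  have hne : (K : Set H).Nonempty := ⟨0, ⟨fun _ => 0, fun i => le_rfl, by simp⟩⟩
  have hcl : IsClosed (K : Set H) := cone_isClosed a
  obtain ⟨y, hy1, hy2⟩ :=
    ProperCone.hyperplane_separation' (E := H) (x₀ := v)
      { carrier := Kc
        zero_mem' := ⟨fun _ => 0, fun i => le_rfl, by simp⟩
        add_mem' := fun hx hy => K.add_mem' hx hy
        smul_mem' := by
          rintro cpos x ⟨lam, hnn, rfl⟩
          exact ⟨fun i => (cpos : ℝ) * lam i, fun i => mul_nonneg cpos.2 (hnn i), by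
            simp [Finset.smul_sum, mul_smul]⟩
        isClosed' := hcl } hvK
  replace hy2 : ⟪y, v⟫_ℝ < 0 := by rw [real_inner_comm]; exact hy2
  replace hy1 : ∀ x ∈ K, 0 ≤ ⟪x, y⟫_ℝ := hy1
  have hmem : ∀ i, a i ∈ K := by
    intro i
    refine ⟨fun j => if j = i then 1 else 0, fun j => by positivity, ?_⟩
    simp [ite_smul]
  have := hv (-y) (fun i => by
    rw [inner_neg_right, neg_nonpos]
    exact hy1 (a i) (hmem i))
  rw [inner_neg_right, neg_nonpos, real_inner_comm] at this
  linarith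

theorem farkas_pi {N : ℕ} {ι : Type*} [Fintype ι] (a : ι → Fin N → ℝ) (v : Fin N → ℝ)
    (hv : ∀ h : Fin N → ℝ, (∀ i, ∑ k, a i k * h k ≤ 0) → ∑ k, v k * h k ≤ 0) :
    ∃ lam : ι → ℝ, (∀ i, 0 ≤ lam i) ∧ ∀ k, v k = ∑ i, lam i * a i k := by
  have key := farkas_inner (H := EuclideanSpace ℝ (Fin N)) (fun i => WithLp.toLp 2 (a i)) (v := WithLp.toLp 2 v) ?_
  · obtain ⟨lam, hnn, heq⟩ := key
    refine ⟨lam, hnn, fun k => ?_⟩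
    have h2 := congrArg (fun x : EuclideanSpace ℝ (Fin N) => x k) heq
    simpa [smul_eq_mul] using h2
  · intro h hh
    have := hv h (fun i => by simpa [PiLp.inner_apply, RCLike.inner_apply, mul_comm] using hh i)
    simpa [PiLp.inner_apply, RCLike.inner_apply, mul_comm] using this

end FarkasLemma

section GNEAux
open Filter
open scoped Topology

lemma eventually_affine_le {g t b : ℝ} (hgb : g ≤ b) (hact : g = b → t ≤ 0) :
    ∀ᶠ ε in 𝓝[>] (0:ℝ), g + ε * t ≤ b := by
  rcases le_or_gt t 0 with ht | ht
  · filter_upwards [self_mem_nhdsWithin] with ε hε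
    have : 0 < ε := hε
    nlinarith
  · have hgb' : g < b := lt_of_le_of_ne hgb (fun h => by nlinarith [hact h])
    have htend : Filter.Tendsto (fun ε : ℝ => g + ε * t) (𝓝[>] (0:ℝ)) (𝓝 g) := by
      have h0 : Filter.Tendsto (fun ε : ℝ => g + ε * t) (𝓝 (0:ℝ)) (𝓝 (g + 0 * t)) :=
        (continuous_const.add (continuous_id.mul continuous_const)).tendsto 0
      simpa using h0.mono_left nhdsWithin_le_nhds
    exact (htend.eventually_lt_const hgb').mono fun ε h => h.le

section Main

variable {n L : ℕ} (α β d c Dlo Dhi : Fin n → ℝ) (τ : ℝ)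
    (π : Fin L → Fin n → ℝ) (F : Fin L → ℝ)

/-- Existence of a minimizer of the centralized problem, plus the variational
inequality it satisfies. -/
lemma exists_min_VI (hα : ∀ k, 0 < α k)
    (hfeas : ∃ Δd, Feasible7 d c Dlo Dhi π F Δd) :
    ∃ xs, Feasible7 d c Dlo Dhi π F xs ∧
      ∀ u, Feasible7 d c Dlo Dhi π F u →
        0 ≤ ∑ k, (2 * α k * xs k + β k) * (u k - xs k) := by
  classical
  set S : Set (Fin n → ℝ) := {x | Feasible7 d c Dlo Dhi π F x} with hS
  have hSne : S.Nonempty := hfeas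
  -- closedness
  have hSeq : S = (⋂ k, ({x : Fin n → ℝ | Dlo k ≤ d k + x k} ∩ {x | d k + x k ≤ Dhi k})) ∩
      ({x : Fin n → ℝ | (∑ k, (d k + x k - c k)) = 0} ∩
        ⋂ l, ({x : Fin n → ℝ | -F l ≤ ∑ k, π l k * (d k + x k - c k)} ∩
          {x | ∑ k, π l k * (d k + x k - c k) ≤ F l})) := by
    ext x
    simp only [hS, Set.mem_setOf_eq, Feasible7, Qset, Set.mem_inter_iff, Set.mem_iInter,
      Set.mem_setOf_eq, forall_and]
  have hcont1 : ∀ k : Fin n, Continuous (fun x : Fin n → ℝ => d k + x k) := by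
    intro k; exact continuous_const.add (continuous_apply k)
  have hcont2 : ∀ l : Fin L, Continuous (fun x : Fin n → ℝ => ∑ k, π l k * (d k + x k - c k)) := by
    intro l
    apply continuous_finset_sum
    intro k _
    exact continuous_const.mul ((continuous_const.add (continuous_apply k)).sub continuous_const)
  have hcont3 : Continuous (fun x : Fin n → ℝ => ∑ k, (d k + x k - c k)) := by
    apply continuous_finset_sum
    intro k _
    exact (continuous_const.add (continuous_apply k)).sub continuous_const
  have hSclosed : IsClosed S := by
    rw [hSeq]
    refine IsClosed.inter (isClosed_iInter fun k => IsClosed.inter ?_ ?_)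
      (IsClosed.inter ?_ (isClosed_iInter fun l => IsClosed.inter ?_ ?_))
    · exact isClosed_le continuous_const (hcont1 k)
    · exact isClosed_le (hcont1 k) continuous_const
    · exact isClosed_eq hcont3 continuous_const
    · exact isClosed_le continuous_const (hcont2 l)
    · exact isClosed_le (hcont2 l) continuous_const
  have hScompact : IsCompact S := by
    have hsub : S ⊆ Set.pi Set.univ (fun k => Set.Icc (Dlo k - d k) (Dhi k - d k)) := by
      intro x hx k _
      obtain ⟨h1, h2⟩ := hx.1 k
      exact ⟨by linarith, by linarith⟩
    exact IsCompact.of_isClosed_subset (isCompact_univ_pi fun k => isCompact_Icc) hSclosed hsub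
  have hFcont : Continuous (fun x : Fin n → ℝ => ∑ k, (α k * (x k) ^ 2 + β k * x k)) := by
    apply continuous_finset_sum
    intro k _
    exact (continuous_const.mul ((continuous_apply k).pow 2)).add
      (continuous_const.mul (continuous_apply k))
  obtain ⟨xs, hxsS, hmin⟩ := hScompact.exists_isMinOn hSne hFcont.continuousOn
  refine ⟨xs, hxsS, ?_⟩
  intro u hu
  set G : ℝ := ∑ k, (2 * α k * xs k + β k) * (u k - xs k) with hG
  set Hh : ℝ := ∑ k, α k * (u k - xs k) ^ 2 with hH
  have hH0 : 0 ≤ Hh :=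
    Finset.sum_nonneg fun k _ => mul_nonneg (hα k).le (sq_nonneg _)
  -- segment membership
  have hseg : ∀ t : ℝ, 0 ≤ t → t ≤ 1 → (fun k => xs k + t * (u k - xs k)) ∈ S := by
    intro t ht0 ht1
    have hbx := hxsS.1
    have hbu := hu.1
    refine ⟨fun k => ?_, ?_, fun l => ?_⟩
    · obtain ⟨h1, h2⟩ := hbx k
      obtain ⟨h3, h4⟩ := hbu k
      dsimp only
      constructor <;> nlinarith
    · have hrw : ∀ k, d k + (xs k + t * (u k - xs k)) - c k =
          (1 - t) * (d k + xs k - c k) + t * (d k + u k - c k) := fun k => by ring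
      calc ∑ k, (d k + (xs k + t * (u k - xs k)) - c k)
          = (1 - t) * (∑ k, (d k + xs k - c k)) + t * (∑ k, (d k + u k - c k)) := by
            rw [Finset.mul_sum, Finset.mul_sum, ← Finset.sum_add_distrib]
            exact Finset.sum_congr rfl fun k _ => hrw k
        _ = 0 := by rw [hxsS.2.1, hu.2.1]; ring
    · have hrw : ∀ k, π l k * (d k + (xs k + t * (u k - xs k)) - c k) =
          (1 - t) * (π l k * (d k + xs k - c k)) + t * (π l k * (d k + u k - c k)) :=
        fun k => by ring
      have hsum : ∑ k, π l k * (d k + (xs k + t * (u k - xs k)) - c k) =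
          (1 - t) * (∑ k, π l k * (d k + xs k - c k)) +
            t * (∑ k, π l k * (d k + u k - c k)) := by
        rw [Finset.mul_sum, Finset.mul_sum, ← Finset.sum_add_distrib]
        exact Finset.sum_congr rfl fun k _ => hrw k
      obtain ⟨h1, h2⟩ := hxsS.2.2 l
      obtain ⟨h3, h4⟩ := hu.2.2 l
      rw [hsum]
      constructor <;> nlinarith
  -- expansion of objective along the segment
  have hexp : ∀ t : ℝ, ∑ k, (α k * ((xs k + t * (u k - xs k))) ^ 2 +
      β k * (xs k + t * (u k - xs k))) =
      (∑ k, (α k * (xs k) ^ 2 + β k * xs k)) + t * G + t ^ 2 * Hh := by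
    intro t
    rw [hG, hH, Finset.mul_sum, Finset.mul_sum, ← Finset.sum_add_distrib,
      ← Finset.sum_add_distrib]
    exact Finset.sum_congr rfl fun k _ => by ring
  -- conclude 0 ≤ G
  by_contra hGneg
  push_neg at hGneg
  set t : ℝ := min 1 (-G / (2 * Hh + 1)) with htdef
  have ht0 : 0 < t := lt_min one_pos (div_pos (by linarith) (by linarith))
  have ht1 : t ≤ 1 := min_le_left _ _
  have htle : t * (2 * Hh + 1) ≤ -G := by
    have : t ≤ -G / (2 * Hh + 1) := min_le_right _ _
    rw [le_div_iff₀ (by positivity)] at this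
    linarith
  have hmem := hseg t ht0.le ht1
  have hineq : (∑ k, (α k * (xs k) ^ 2 + β k * xs k)) ≤
      (∑ k, (α k * (xs k) ^ 2 + β k * xs k)) + t * G + t ^ 2 * Hh := by
    have h2 := hmin hmem
    simpa [hexp t] using h2
  nlinarith [mul_pos ht0 ht0, mul_le_mul_of_nonneg_left htle ht0.le]

end Main

theorem gne_exists_aux {n L : ℕ} (α β ζ d c Dlo Dhi : Fin n → ℝ) (τ : ℝ)
    (π : Fin L → Fin n → ℝ) (F : Fin L → ℝ)
    (hα : ∀ k, 0 < α k) (hτ : 0 < τ)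
    (hfeas : ∃ Δd, Feasible7 d c Dlo Dhi π F Δd) :
    ∃ Δd q qc δ : Fin n → ℝ, IsGNE α β ζ d c Dlo Dhi τ π F Δd q qc δ := by
  classical
  obtain ⟨xs, hxsS, hVI⟩ := exists_min_VI α β d c Dlo Dhi π F hα hfeas
  set v : Fin n → ℝ := fun k => -(2 * α k * xs k + β k) with hv
  set aLo : Fin n → Fin n → ℝ := fun k =>
    if d k + xs k = Dlo k then (fun j => if j = k then -1 else 0) else 0 with haLo
  set aHi : Fin n → Fin n → ℝ := fun k =>
    if d k + xs k = Dhi k then (fun j => if j = k then 1 else 0) else 0 with haHi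
  set aUp : Fin L → Fin n → ℝ := fun l =>
    if (∑ k, π l k * (d k + xs k - c k)) = F l then π l else 0 with haUp
  set aLow : Fin L → Fin n → ℝ := fun l =>
    if (∑ k, π l k * (d k + xs k - c k)) = -F l then (fun j => -π l j) else 0 with haLow
  set aEq : Bool → Fin n → ℝ := fun b => if b then (fun _ => 1) else (fun _ => -1) with haEq
  set a : ((Fin n ⊕ Fin n) ⊕ (Fin L ⊕ Fin L) ⊕ Bool) → Fin n → ℝ :=
    Sum.elim (Sum.elim aLo aHi) (Sum.elim (Sum.elim aUp aLow) aEq) with ha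
  -- Farkas hypothesis
  have hhyp : ∀ h : Fin n → ℝ, (∀ i, ∑ k, a i k * h k ≤ 0) → ∑ k, v k * h k ≤ 0 := by
    intro h hh
    have hlo : ∀ k, d k + xs k = Dlo k → 0 ≤ h k := by
      intro k hk
      have h1 := hh (Sum.inl (Sum.inl k))
      simp only [ha, Sum.elim_inl, haLo, if_pos hk] at h1
      simp only [ite_mul, neg_one_mul, zero_mul, Finset.sum_ite_eq', Finset.mem_univ,
        if_pos] at h1
      linarith
    have hhi : ∀ k, d k + xs k = Dhi k → h k ≤ 0 := by
      intro k hk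
      have h1 := hh (Sum.inl (Sum.inr k))
      simp only [ha, Sum.elim_inl, Sum.elim_inr, haHi, if_pos hk] at h1
      simp only [ite_mul, one_mul, zero_mul, Finset.sum_ite_eq', Finset.mem_univ,
        if_pos] at h1
      exact h1
    have hup : ∀ l, (∑ k, π l k * (d k + xs k - c k)) = F l → ∑ k, π l k * h k ≤ 0 := by
      intro l hl
      have h1 := hh (Sum.inr (Sum.inl (Sum.inl l)))
      simpa only [ha, Sum.elim_inl, Sum.elim_inr, haUp, if_pos hl] using h1
    have hlow : ∀ l, (∑ k, π l k * (d k + xs k - c k)) = -F l → 0 ≤ ∑ k, π l k * h k := by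
      intro l hl
      have h1 := hh (Sum.inr (Sum.inl (Sum.inr l)))
      simp only [ha, Sum.elim_inl, Sum.elim_inr, haLow, if_pos hl, neg_mul,
        Finset.sum_neg_distrib, neg_nonpos] at h1
      exact h1
    have hsum0 : ∑ k, h k = 0 := by
      have h1 := hh (Sum.inr (Sum.inr true))
      have h2 := hh (Sum.inr (Sum.inr false))
      simp only [ha, Sum.elim_inr, haEq, if_pos, if_neg, Bool.false_eq_true,
        not_false_eq_true, one_mul, neg_mul, Finset.sum_neg_distrib, neg_nonpos] at h1 h2
      linarith
    -- build a feasible perturbation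
    have hsumrw : ∀ (l : Fin L) (ε : ℝ), ∑ k, π l k * (d k + (xs k + ε * h k) - c k) =
        (∑ k, π l k * (d k + xs k - c k)) + ε * (∑ k, π l k * h k) := by
      intro l ε
      rw [Finset.mul_sum, ← Finset.sum_add_distrib]
      exact Finset.sum_congr rfl fun k _ => by ring
    have hbox1 : ∀ k : Fin n, ∀ᶠ ε in 𝓝[>] (0:ℝ), Dlo k ≤ d k + (xs k + ε * h k) := by
      intro k
      have hev := eventually_affine_le (g := -(d k + xs k)) (t := -(h k)) (b := -(Dlo k))
        (by linarith [(hxsS.1 k).1])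
        (fun hact => by
          have h2 : d k + xs k = Dlo k := by linarith
          linarith [hlo k h2])
      exact hev.mono fun ε hε => by linarith
    have hbox2 : ∀ k : Fin n, ∀ᶠ ε in 𝓝[>] (0:ℝ), d k + (xs k + ε * h k) ≤ Dhi k := by
      intro k
      have hev := eventually_affine_le (g := d k + xs k) (t := h k) (b := Dhi k)
        ((hxsS.1 k).2) (fun hact => hhi k hact)
      exact hev.mono fun ε hε => by linarith
    have hline1 : ∀ l : Fin L, ∀ᶠ ε in 𝓝[>] (0:ℝ),
        ∑ k, π l k * (d k + (xs k + ε * h k) - c k) ≤ F l := by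
      intro l
      have hev := eventually_affine_le (g := ∑ k, π l k * (d k + xs k - c k))
        (t := ∑ k, π l k * h k) (b := F l) ((hxsS.2.2 l).2) (fun hact => hup l hact)
      exact hev.mono fun ε hε => by rw [hsumrw l ε]; exact hε
    have hline2 : ∀ l : Fin L, ∀ᶠ ε in 𝓝[>] (0:ℝ),
        -F l ≤ ∑ k, π l k * (d k + (xs k + ε * h k) - c k) := by
      intro l
      have hev := eventually_affine_le (g := -(∑ k, π l k * (d k + xs k - c k)))
        (t := -(∑ k, π l k * h k)) (b := F l)
        (by linarith [(hxsS.2.2 l).1])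
        (fun hact => by
          have h2 : (∑ k, π l k * (d k + xs k - c k)) = -F l := by linarith
          linarith [hlow l h2])
      exact hev.mono fun ε hε => by rw [hsumrw l ε]; linarith
    have heqz : ∀ ε : ℝ, ∑ k, (d k + (xs k + ε * h k) - c k) = 0 := by
      intro ε
      have : ∑ k, (d k + (xs k + ε * h k) - c k) =
          (∑ k, (d k + xs k - c k)) + ε * (∑ k, h k) := by
        rw [Finset.mul_sum, ← Finset.sum_add_distrib]
        exact Finset.sum_congr rfl fun k _ => by ring
      rw [this, hsum0, hxsS.2.1]
      ring
    have hev : ∀ᶠ ε in 𝓝[>] (0:ℝ),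
        Feasible7 d c Dlo Dhi π F (fun j => xs j + ε * h j) := by
      have H1 := Filter.eventually_all.mpr hbox1
      have H2 := Filter.eventually_all.mpr hbox2
      have H3 := Filter.eventually_all.mpr hline1
      have H4 := Filter.eventually_all.mpr hline2
      filter_upwards [H1, H2, H3, H4] with ε h1 h2 h3 h4
      exact ⟨fun k => ⟨h1 k, h2 k⟩, heqz ε, fun l => ⟨h4 l, h3 l⟩⟩
    obtain ⟨ε, hεfeas, hε0⟩ := (hev.and self_mem_nhdsWithin).exists
    have hε0' : (0:ℝ) < ε := hε0
    have hVIε := hVI _ hεfeas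
    have h6 : ∑ k, (2 * α k * xs k + β k) * ((fun j => xs j + ε * h j) k - xs k)
        = ε * (-(∑ k, v k * h k)) := by
      rw [← Finset.sum_neg_distrib, Finset.mul_sum]
      exact Finset.sum_congr rfl fun k _ => by simp only [hv]; ring
    have h7 : 0 ≤ ε * (-(∑ k, v k * h k)) := h6 ▸ hVIε
    nlinarith [h7, hε0']
  obtain ⟨lam, hlam0, hlam⟩ := farkas_pi a v hhyp
  -- the multiplier decomposition
  set p : Fin n → ℝ := fun k =>
    (∑ l, lam (Sum.inr (Sum.inl (Sum.inl l))) * aUp l k) +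
    (∑ l, lam (Sum.inr (Sum.inl (Sum.inr l))) * aLow l k) +
    (lam (Sum.inr (Sum.inr true)) - lam (Sum.inr (Sum.inr false))) with hp
  set bb : Fin n → ℝ := fun k =>
    lam (Sum.inl (Sum.inl k)) * aLo k k + lam (Sum.inl (Sum.inr k)) * aHi k k with hbb
  have hdecomp : ∀ k, v k = bb k + p k := by
    intro k
    rw [hlam k, Fintype.sum_sum_type, Fintype.sum_sum_type, Fintype.sum_sum_type,
      Fintype.sum_bool]
    have e1 : (∑ k' : Fin n, lam (Sum.inl (Sum.inl k')) * a (Sum.inl (Sum.inl k')) k)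
        = lam (Sum.inl (Sum.inl k)) * aLo k k := by
      rw [Finset.sum_eq_single k]
      · simp [ha]
      · intro k' _ hne
        have : aLo k' k = 0 := by
          simp only [haLo, apply_ite (fun f : Fin n → ℝ => f k), Pi.zero_apply]
          simp [Ne.symm hne]
        simp [ha, this]
      · simp
    have e2 : (∑ k' : Fin n, lam (Sum.inl (Sum.inr k')) * a (Sum.inl (Sum.inr k')) k)
        = lam (Sum.inl (Sum.inr k)) * aHi k k := by
      rw [Finset.sum_eq_single k]
      · simp [ha]
      · intro k' _ hne
        have : aHi k' k = 0 := by
          simp only [haHi, apply_ite (fun f : Fin n → ℝ => f k), Pi.zero_apply]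
          simp [Ne.symm hne]
        simp [ha, this]
      · simp
    rw [e1, e2, Fintype.sum_sum_type]
    simp only [ha, Sum.elim_inl, Sum.elim_inr, haEq, if_pos, Bool.false_eq_true]
    norm_num
    simp only [hbb, hp]
    ring
  -- the GNE candidate: qc := d + xs - c, δ := -p/τ, q := qc - δ
  have htd : ∀ k, τ * (-(p k) / τ) = -(p k) := by
    intro k
    field_simp
  -- key inequality from the box multipliers
  have hbkey : ∀ k, ∀ x : ℝ, Dlo k ≤ d k + x → d k + x ≤ Dhi k →
      0 ≤ (-(bb k)) * (x - xs k) := by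
    intro k x hx1 hx2
    by_cases hA : d k + xs k = Dlo k
    · by_cases hB : d k + xs k = Dhi k
      · have hxx : x = xs k := by
          have := hxsS.1 k
          linarith
        rw [hxx]
        simp
      · have hbbk : bb k = -(lam (Sum.inl (Sum.inl k))) := by
          simp only [hbb, haLo, haHi, if_pos hA, if_neg hB]
          simp
        rw [hbbk]
        have h1 : 0 ≤ x - xs k := by linarith
        have h2 := hlam0 (Sum.inl (Sum.inl k))
        nlinarith
    · by_cases hB : d k + xs k = Dhi k
      · have hbbk : bb k = lam (Sum.inl (Sum.inr k)) := by
          simp only [hbb, haLo, haHi, if_neg hA, if_pos hB]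
          simp
        rw [hbbk]
        have h1 : x - xs k ≤ 0 := by linarith
        have h2 := hlam0 (Sum.inl (Sum.inr k))
        nlinarith
      · have hbbk : bb k = 0 := by
          simp only [hbb, haLo, haHi, if_neg hA, if_neg hB]
          simp
        rw [hbbk]
        simp
  -- operator-side key inequality
  have hop : ∀ qc' : Fin n → ℝ, qc' ∈ Qset π F →
      ∑ k, p k * (qc' k - (d k + xs k - c k)) ≤ 0 := by
    intro qc' hqc'
    have hQ0 : ∑ k, (d k + xs k - c k) = 0 := hxsS.2.1
    have hΔsum : ∑ k, (qc' k - (d k + xs k - c k)) = 0 := by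
      rw [Finset.sum_sub_distrib, hqc'.1, hQ0]
      ring
    have step1 : ∑ k, p k * (qc' k - (d k + xs k - c k)) =
        (∑ k, ∑ l, lam (Sum.inr (Sum.inl (Sum.inl l))) * aUp l k *
          (qc' k - (d k + xs k - c k))) +
        (∑ k, ∑ l, lam (Sum.inr (Sum.inl (Sum.inr l))) * aLow l k *
          (qc' k - (d k + xs k - c k))) +
        (∑ k, (lam (Sum.inr (Sum.inr true)) - lam (Sum.inr (Sum.inr false))) *
          (qc' k - (d k + xs k - c k))) := by
      rw [← Finset.sum_add_distrib, ← Finset.sum_add_distrib]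
      refine Finset.sum_congr rfl fun k _ => ?_
      simp only [hp]
      rw [add_mul, add_mul, Finset.sum_mul, Finset.sum_mul]
    have hsplit : ∑ k, p k * (qc' k - (d k + xs k - c k)) =
        (∑ l, lam (Sum.inr (Sum.inl (Sum.inl l))) *
          (∑ k, aUp l k * (qc' k - (d k + xs k - c k)))) +
        (∑ l, lam (Sum.inr (Sum.inl (Sum.inr l))) *
          (∑ k, aLow l k * (qc' k - (d k + xs k - c k)))) +
        (lam (Sum.inr (Sum.inr true)) - lam (Sum.inr (Sum.inr false))) *
          (∑ k, (qc' k - (d k + xs k - c k))) := by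
      rw [step1]
      congr 1
      · congr 1
        · rw [Finset.sum_comm]
          refine Finset.sum_congr rfl fun l _ => ?_
          rw [Finset.mul_sum]
          exact Finset.sum_congr rfl fun k _ => by ring
        · rw [Finset.sum_comm]
          refine Finset.sum_congr rfl fun l _ => ?_
          rw [Finset.mul_sum]
          exact Finset.sum_congr rfl fun k _ => by ring
      · rw [← Finset.mul_sum]
    rw [hsplit, hΔsum, mul_zero, add_zero]
    have hterm1 : ∀ l, lam (Sum.inr (Sum.inl (Sum.inl l))) *
        (∑ k, aUp l k * (qc' k - (d k + xs k - c k))) ≤ 0 := by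
      intro l
      by_cases hact : (∑ k, π l k * (d k + xs k - c k)) = F l
      · have hval : ∑ k, aUp l k * (qc' k - (d k + xs k - c k)) ≤ 0 := by
          simp only [haUp, if_pos hact]
          have e : ∑ k, π l k * (qc' k - (d k + xs k - c k)) =
              (∑ k, π l k * qc' k) - ∑ k, π l k * (d k + xs k - c k) := by
            rw [← Finset.sum_sub_distrib]
            exact Finset.sum_congr rfl fun k _ => by ring
          rw [e, hact]
          have h1 := (hqc'.2 l).2
          linarith
        exact mul_nonpos_of_nonneg_of_nonpos (hlam0 _) hval
      · simp [haUp, hact]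
    have hterm2 : ∀ l, lam (Sum.inr (Sum.inl (Sum.inr l))) *
        (∑ k, aLow l k * (qc' k - (d k + xs k - c k))) ≤ 0 := by
      intro l
      by_cases hact : (∑ k, π l k * (d k + xs k - c k)) = -F l
      · have hval : ∑ k, aLow l k * (qc' k - (d k + xs k - c k)) ≤ 0 := by
          simp only [haLow, if_pos hact]
          have e : ∑ k, (-π l k) * (qc' k - (d k + xs k - c k)) =
              (∑ k, π l k * (d k + xs k - c k)) - ∑ k, π l k * qc' k := by
            rw [← Finset.sum_sub_distrib]
            exact Finset.sum_congr rfl fun k _ => by ring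
          rw [e, hact]
          have h1 := (hqc'.2 l).1
          linarith
        exact mul_nonpos_of_nonneg_of_nonpos (hlam0 _) hval
      · simp [haLow, hact]
    have hs1 : (∑ l, lam (Sum.inr (Sum.inl (Sum.inl l))) *
        (∑ k, aUp l k * (qc' k - (d k + xs k - c k)))) ≤ 0 :=
      Finset.sum_nonpos fun l _ => hterm1 l
    have hs2 : (∑ l, lam (Sum.inr (Sum.inl (Sum.inr l))) *
        (∑ k, aLow l k * (qc' k - (d k + xs k - c k)))) ≤ 0 :=
      Finset.sum_nonpos fun l _ => hterm2 l
    linarith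
  -- assemble the GNE
  refine ⟨xs, fun k => (d k + xs k - c k) - (-(p k) / τ),
    fun k => d k + xs k - c k, fun k => -(p k) / τ, ?_, ?_, ?_, ?_⟩
  · -- user optimality
    intro k
    constructor
    · refine ⟨by ring, (hxsS.1 k).1, (hxsS.1 k).2⟩
    · intro x y hy hx1 hx2
      dsimp only
      dsimp only at hy
      set D : ℝ := -(p k) / τ with hDdef
      have hk2 : τ * D = -(p k) := htd k
      clear_value D
      have hyval : y = d k + x - c k - D := by linarith
      subst hyval
      have hk1 := hbkey k x hx1 hx2
      have hk3 : v k = bb k + p k := hdecomp k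
      have hk4 : v k = -(2 * α k * xs k + β k) := by rw [hv]
      have hk5 := mul_nonneg (hα k).le (sq_nonneg (x - xs k))
      have hk6 := mul_nonneg hτ.le (sq_nonneg (x - xs k))
      have hk2u : τ * D * (x - xs k) = -(p k) * (x - xs k) := by rw [hk2]
      have hk7 : -(2 * α k * xs k + β k) = bb k + p k := by rw [← hk4, hk3]
      have hbbval : -(bb k) = 2 * α k * xs k + β k + p k := by linarith
      have hk1' : 0 ≤ (2 * α k * xs k + β k + p k) * (x - xs k) := by
        rw [← hbbval]; exact hk1
      nlinarith [hk1', hk2u, hk5, hk6]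
  · -- δ = qc - q
    intro k
    ring
  · -- qc ∈ Q
    exact hxsS.2
  · -- operator optimality
    intro qc' δ' hδ' hqc'
    have hexp : ∀ k, δ' k ^ 2 = (-(p k) / τ) ^ 2 +
        (qc' k - (d k + xs k - c k)) ^ 2 +
        2 * ((-(p k) / τ) * (qc' k - (d k + xs k - c k))) := by
      intro k
      rw [hδ' k]
      ring
    have hsum : ∑ k, δ' k ^ 2 = (∑ k, (-(p k) / τ) ^ 2) +
        (∑ k, (qc' k - (d k + xs k - c k)) ^ 2) +
        2 * ∑ k, ((-(p k) / τ) * (qc' k - (d k + xs k - c k))) := by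
      rw [Finset.mul_sum, ← Finset.sum_add_distrib, ← Finset.sum_add_distrib]
      exact Finset.sum_congr rfl fun k _ => hexp k
    have hcross : 0 ≤ ∑ k, ((-(p k) / τ) * (qc' k - (d k + xs k - c k))) := by
      have e : ∑ k, ((-(p k) / τ) * (qc' k - (d k + xs k - c k))) =
          (∑ k, p k * (qc' k - (d k + xs k - c k))) * (-(1 / τ)) := by
        rw [Finset.sum_mul]
        exact Finset.sum_congr rfl fun k _ => by ring
      rw [e]
      have h1 := hop qc' hqc'
      have h2 : -(1 / τ) ≤ 0 := by
        have h3 : 0 < 1 / τ := by positivity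
        linarith
      have h4 := mul_nonneg (neg_nonneg.2 h1) (neg_nonneg.2 h2)
      rw [neg_mul_neg] at h4
      exact h4
    have hsq : 0 ≤ ∑ k, (qc' k - (d k + xs k - c k)) ^ 2 :=
      Finset.sum_nonneg fun k _ => sq_nonneg _
    rw [hsum]
    linarith

end GNEAux

/-- if the centralized problem (7) is feasible, the energy-sharing
game has at least one generalized Nash equilibrium. -/
theorem gne_exists (I J L : ℕ)
    (α β ζ d w Δw Dlo Dhi : Fin (I + J) → ℝ) (τ : ℝ)
    (π : Fin L → Fin (I + J) → ℝ) (F : Fin L → ℝ)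
    (hα : ∀ k, 0 < α k) (hD : ∀ k, Dlo k ≤ Dhi k) (hτ : 0 < τ)
    (hfeas : ∃ Δd, Feasible7 d (cvec I J w Δw) Dlo Dhi π F Δd) :
    ∃ Δd q qc δ : Fin (I + J) → ℝ,
      IsGNE α β ζ d (cvec I J w Δw) Dlo Dhi τ π F Δd q qc δ := by
  exact gne_exists_aux α β ζ d (cvec I J w Δw) Dlo Dhi τ π F hα hτ hfeas
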